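/- Let m, n be positive integers, let r ≤ s ≤ min(m,n), and let A be a complex m×n matrix of rank r with singular values σ_1 ≥ … ≥ σ_r > 0 and Ã a complex m×n matrix of rank s with singular values σ̃_1 ≥ … ≥ σ̃_s > 0. Set H = (AᴴA)^{1/2} and H̃ = (ÃᴴÃ)^{1/2}. If r ≠ s, or r = s but σ_j ≠ σ̃_j for some j, then the strict inequality ‖H − H̃‖_F < √2 · ‖A − Ã‖_F holds. -/

import Mathlib

open scoped BigOperators Matrix ComplexOrder

noncomputable def frob {m n : ℕ} (A : Matrix (Fin m) (Fin n) ℂ) : ℝ :=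
  Real.sqrt (∑ i, ∑ j, ‖A i j‖ ^ 2)

noncomputable def absMat {m n : ℕ} (A : Matrix (Fin m) (Fin n) ℂ) :
    Matrix (Fin n) (Fin n) ℂ :=
  (Matrix.posSemidef_conjTranspose_mul_self A).1.eigenvectorUnitary.1 *
    Matrix.diagonal ((↑) ∘ (√·) ∘ (Matrix.posSemidef_conjTranspose_mul_self A).1.eigenvalues) *
    (star (Matrix.posSemidef_conjTranspose_mul_self A).1.eigenvectorUnitary : Matrix (Fin n) (Fin n) ℂ)

noncomputable def svdMat (m n r : ℕ) (σ : ℕ → ℝ) : Matrix (Fin m) (Fin n) ℂ :=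
  Matrix.of fun i j =>
    if (i : ℕ) = (j : ℕ) ∧ (i : ℕ) < r then ((σ ((i : ℕ) + 1) : ℝ) : ℂ) else 0

/-- `A` admits a singular value decomposition with singular values
`σ 1, …, σ r` (indexed from 1) on the diagonal. -/
def HasSVD {m n : ℕ} (A : Matrix (Fin m) (Fin n) ℂ) (r : ℕ) (σ : ℕ → ℝ) : Prop :=
  ∃ (U : Matrix (Fin m) (Fin m) ℂ) (V : Matrix (Fin n) (Fin n) ℂ),
    Uᴴ * U = 1 ∧ U * Uᴴ = 1 ∧ Vᴴ * V = 1 ∧ V * Vᴴ = 1 ∧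
    A = U * svdMat m n r σ * Vᴴ

/-- `σ 1 ≥ σ 2 ≥ … ≥ σ r > 0`. -/
def SingVals (r : ℕ) (σ : ℕ → ℝ) : Prop :=
  (∀ j, 1 ≤ j → j ≤ r → 0 < σ j) ∧ ∀ j, 1 ≤ j → j < r → σ (j + 1) ≤ σ j

/-- Generalized polar decomposition: `A = Q * |A|`, where `Q` is a rank-`r` partial
isometry such that the column space of `Qᴴ` equals the column space of `|A|`. -/
def IsPolar {m n : ℕ} (A Q : Matrix (Fin m) (Fin n) ℂ) (r : ℕ) : Prop :=
  A = Q * absMat A ∧ Q * Qᴴ * Q = Q ∧ Q.rank = r ∧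
    LinearMap.range (Matrix.mulVecLin Qᴴ) =
      LinearMap.range (Matrix.mulVecLin (absMat A))


/-! ### Auxiliary machinery for the proof -/

noncomputable def frobSq {m n : ℕ} (A : Matrix (Fin m) (Fin n) ℂ) : ℝ :=
  ∑ i, ∑ j, ‖A i j‖ ^ 2

lemma frob_eq_sqrt_frobSq {m n : ℕ} (A : Matrix (Fin m) (Fin n) ℂ) :
    frob A = Real.sqrt (frobSq A) := rfl

lemma frobSq_nonneg {m n : ℕ} (A : Matrix (Fin m) (Fin n) ℂ) : 0 ≤ frobSq A :=
  Finset.sum_nonneg fun _ _ => Finset.sum_nonneg fun _ _ => sq_nonneg _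

lemma frobSq_eq_trace {m n : ℕ} (A : Matrix (Fin m) (Fin n) ℂ) :
    frobSq A = (Matrix.trace (Aᴴ * A)).re := by
  unfold frobSq
  rw [Matrix.trace, Complex.re_sum]
  rw [Finset.sum_comm]
  refine Finset.sum_congr rfl fun j _ => ?_
  rw [Matrix.diag_apply, Matrix.mul_apply, Complex.re_sum]
  refine Finset.sum_congr rfl fun i _ => ?_
  rw [Matrix.conjTranspose_apply]
  rw [Complex.star_def, mul_comm, Complex.mul_conj]
  rw [Complex.ofReal_re, ← Complex.sq_norm]

lemma trace_unitary_conj {n : ℕ} (V X : Matrix (Fin n) (Fin n) ℂ) (hV : Vᴴ * V = 1) :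
    Matrix.trace (V * X * Vᴴ) = Matrix.trace X := by
  rw [Matrix.trace_mul_comm, ← Matrix.mul_assoc, hV, Matrix.one_mul]

def cF (m : ℕ) (hm : 0 < m) (i : ℕ) : Fin m := ⟨i % m, Nat.mod_lt _ hm⟩

lemma cF_coe {m i : ℕ} (hm : 0 < m) (h : i < m) : ((cF m hm i : Fin m) : ℕ) = i :=
  Nat.mod_eq_of_lt h

lemma cF_fin {m : ℕ} (hm : 0 < m) (p : Fin m) : cF m hm ↑p = p :=
  Fin.ext (Nat.mod_eq_of_lt p.isLt)

lemma sum_if_range {M : Type*} [AddCommMonoid M] {k n : ℕ} (h : k ≤ n) (g : ℕ → M) :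
    (∑ i ∈ Finset.range n, if i < k then g i else 0) = ∑ i ∈ Finset.range k, g i := by
  rw [← Finset.sum_subset (Finset.range_subset_range.2 h)
    (fun x _ hx => if_neg (by simpa using hx))]
  exact Finset.sum_congr rfl fun x hx => if_pos (Finset.mem_range.1 hx)

lemma svd_star {m n k : ℕ} (ρ : ℕ → ℝ) (a : Fin m) (p : Fin n) :
    star (svdMat m n k ρ a p) = svdMat m n k ρ a p := by
  simp [svdMat, apply_ite (star : ℂ → ℂ), Complex.star_def, Complex.conj_ofReal]

lemma collapse {m n : ℕ} (hm : 0 < m) (hn : 0 < n) (k : ℕ) (ρ : ℕ → ℝ)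
    (hkm : k ≤ m) (hkn : k ≤ n) (f : Fin m → Fin n → ℂ) :
    (∑ a : Fin m, ∑ p : Fin n, svdMat m n k ρ a p * f a p)
      = ∑ i ∈ Finset.range k, (ρ (i+1) : ℂ) * f (cF m hm i) (cF n hn i) := by
  have inner : ∀ a : Fin m, (∑ p : Fin n, svdMat m n k ρ a p * f a p)
      = if (a : ℕ) < k then (ρ ((a : ℕ)+1) : ℂ) * f a (cF n hn ↑a) else 0 := by
    intro a
    by_cases ha : (a : ℕ) < k
    · rw [if_pos ha, Finset.sum_eq_single (cF n hn ↑a)]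
      · have hc : ((cF n hn ↑a : Fin n) : ℕ) = (a : ℕ) := cF_coe hn (lt_of_lt_of_le ha hkn)
        rw [svdMat, Matrix.of_apply, hc, if_pos ⟨rfl, ha⟩]
      · intro p _ hp
        rw [svdMat, Matrix.of_apply, if_neg, zero_mul]
        rintro ⟨h1, -⟩
        exact hp (Fin.ext (by rw [cF_coe hn (h1 ▸ p.isLt), ← h1]))
      · intro h; exact absurd (Finset.mem_univ _) h
    · rw [if_neg ha]
      refine Finset.sum_eq_zero fun p _ => ?_
      rw [svdMat, Matrix.of_apply, if_neg (fun h => ha h.2), zero_mul]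
  have step1 : (∑ a : Fin m, ∑ p : Fin n, svdMat m n k ρ a p * f a p)
      = ∑ a : Fin m, (fun i : ℕ =>
          if i < k then (ρ (i+1) : ℂ) * f (cF m hm i) (cF n hn i) else 0) ↑a := by
    refine Finset.sum_congr rfl fun a _ => ?_
    simp only [inner a, cF_fin hm a]
  rw [step1, Fin.sum_univ_eq_sum_range
    (fun i : ℕ => if i < k then (ρ (i+1) : ℂ) * f (cF m hm i) (cF n hn i) else 0) m,
    sum_if_range hkm]

lemma trace_svd_conjTranspose_mul {m n k : ℕ} (hm : 0 < m) (hn : 0 < n) (ρ : ℕ → ℝ)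
    (hkm : k ≤ m) (hkn : k ≤ n) (M : Matrix (Fin m) (Fin n) ℂ) :
    Matrix.trace ((svdMat m n k ρ)ᴴ * M)
      = ∑ i ∈ Finset.range k, (ρ (i+1) : ℂ) * M (cF m hm i) (cF n hn i) := by
  rw [← collapse hm hn k ρ hkm hkn (fun a p => M a p)]
  rw [Matrix.trace]
  simp only [Matrix.diag_apply, Matrix.mul_apply, Matrix.conjTranspose_apply, svd_star]
  exact Finset.sum_comm

lemma mul_svd_mul_conjT_apply {m n k : ℕ} (hm : 0 < m) (hn : 0 < n) (ρ : ℕ → ℝ)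
    (hkm : k ≤ m) (hkn : k ≤ n) (W : Matrix (Fin m) (Fin m) ℂ)
    (Z : Matrix (Fin n) (Fin n) ℂ) (x : Fin m) (y : Fin n) :
    (W * svdMat m n k ρ * Zᴴ) x y
      = ∑ j ∈ Finset.range k, (ρ (j+1) : ℂ) *
          (W x (cF m hm j) * star (Z y (cF n hn j))) := by
  rw [← collapse hm hn k ρ hkm hkn (fun b q => W x b * star (Z y q))]
  simp only [Matrix.mul_apply, Matrix.conjTranspose_apply, Finset.sum_mul]
  rw [Finset.sum_comm]
  exact Finset.sum_congr rfl fun b _ => Finset.sum_congr rfl fun q _ => by ring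

lemma svd_conjT_mul_self {m n k : ℕ} (hm : 0 < m) (ρ : ℕ → ℝ) (hkm : k ≤ m) :
    (svdMat m n k ρ)ᴴ * svdMat m n k ρ
      = Matrix.diagonal (fun p : Fin n => ((if (p:ℕ) < k then ρ ((p:ℕ)+1) else 0 : ℝ) : ℂ))
      * Matrix.diagonal (fun p : Fin n => ((if (p:ℕ) < k then ρ ((p:ℕ)+1) else 0 : ℝ) : ℂ)) := by
  rw [Matrix.diagonal_mul_diagonal]
  ext p q
  rw [Matrix.mul_apply]
  simp only [Matrix.conjTranspose_apply, svd_star]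
  by_cases hpq : p = q
  · subst hpq
    rw [Matrix.diagonal_apply_eq]
    by_cases hp : (p : ℕ) < k
    · rw [Finset.sum_eq_single (cF m hm ↑p)]
      · rw [svdMat, Matrix.of_apply, cF_coe hm (lt_of_lt_of_le hp hkm), if_pos ⟨rfl, hp⟩,
          if_pos hp]
      · intro a _ ha
        rw [svdMat, Matrix.of_apply, if_neg, zero_mul]
        rintro ⟨h1, -⟩
        exact ha (Fin.ext (by rw [h1, cF_coe hm (lt_of_lt_of_le hp hkm)]))
      · intro h; exact absurd (Finset.mem_univ _) h
    · rw [if_neg hp, Complex.ofReal_zero, mul_zero]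
      refine Finset.sum_eq_zero fun a _ => ?_
      rw [svdMat, Matrix.of_apply, if_neg (fun (h : (a:ℕ) = (p:ℕ) ∧ (a:ℕ) < k) => hp (h.1 ▸ h.2)), zero_mul]
      -- note: h.1 : ↑a = ↑p, h.2 : ↑a < k
  · rw [Matrix.diagonal_apply_ne _ hpq]
    refine Finset.sum_eq_zero fun a _ => ?_
    by_cases h1 : (a : ℕ) = (p : ℕ) ∧ (a : ℕ) < k
    · rw [svdMat]
      have : ¬((a : ℕ) = (q : ℕ) ∧ (a : ℕ) < k) := by
        rintro ⟨h2, -⟩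
        exact hpq (Fin.ext (h1.1.symm.trans h2))
      simp only [Matrix.of_apply, if_neg this, mul_zero]
    · rw [svdMat]
      simp only [Matrix.of_apply, if_neg h1, zero_mul]

lemma absMat_eq {m n k : ℕ} (hm : 0 < m) (ρ : ℕ → ℝ) (hkm : k ≤ m)
    (hρ : ∀ j, 1 ≤ j → j ≤ k → 0 < ρ j)
    (A : Matrix (Fin m) (Fin n) ℂ) (U : Matrix (Fin m) (Fin m) ℂ)
    (V : Matrix (Fin n) (Fin n) ℂ)
    (hU : Uᴴ * U = 1) (hV : Vᴴ * V = 1)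
    (hAeq : A = U * svdMat m n k ρ * Vᴴ) :
    absMat A = V * Matrix.diagonal
      (fun p : Fin n => ((if (p:ℕ) < k then ρ ((p:ℕ)+1) else 0 : ℝ) : ℂ)) * Vᴴ := by
  set D := Matrix.diagonal
      (fun p : Fin n => ((if (p:ℕ) < k then ρ ((p:ℕ)+1) else 0 : ℝ) : ℂ)) with hD
  have hDpsd : Matrix.PosSemidef D := by
    rw [hD]
    refine Matrix.posSemidef_diagonal_iff.2 fun p => ?_
    rw [Complex.zero_le_real]
    by_cases hp : (p : ℕ) < k
    · rw [if_pos hp]; exact (hρ _ (Nat.succ_le_succ (Nat.zero_le _)) hp).le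
    · rw [if_neg hp]
  have hpsd : Matrix.PosSemidef (V * D * Vᴴ) := hDpsd.mul_mul_conjTranspose_same V
  have hsq : (V * D * Vᴴ) ^ 2 = Aᴴ * A := by
    rw [pow_two, hAeq]
    have hDD : D * D = (svdMat m n k ρ)ᴴ * svdMat m n k ρ :=
      (svd_conjT_mul_self hm ρ hkm).symm
    simp only [Matrix.conjTranspose_mul, Matrix.conjTranspose_conjTranspose, Matrix.mul_assoc]
    rw [← Matrix.mul_assoc Uᴴ U, hU, Matrix.one_mul, ← Matrix.mul_assoc Vᴴ V, hV,
      Matrix.one_mul, ← Matrix.mul_assoc D D, hDD, Matrix.mul_assoc]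
  have hB : IsSelfAdjoint (V * D * Vᴴ) := hpsd.1
  have hspec : ∀ x ∈ spectrum ℝ (V * D * Vᴴ), 0 ≤ x := by
    intro x hx
    rw [hpsd.1.spectrum_real_eq_range_eigenvalues] at hx
    obtain ⟨i, rfl⟩ := hx
    exact hpsd.eigenvalues_nonneg i
  have habs : absMat A = cfc Real.sqrt (Aᴴ * A) := by
    rw [(Matrix.posSemidef_conjTranspose_mul_self A).1.cfc_eq Real.sqrt]; rfl
  rw [habs, ← hsq, ← cfc_pow_id (R := ℝ) (V * D * Vᴴ) 2 hB,
    ← cfc_comp Real.sqrt (fun x : ℝ => x ^ 2) (V * D * Vᴴ) hB,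
    cfc_congr (g := id) (fun x hx => by simp [Real.sqrt_sq (hspec x hx)])]
  exact cfc_id ℝ (V * D * Vᴴ) hB

lemma unitary_row_sum {m : ℕ} (W : Matrix (Fin m) (Fin m) ℂ) (hW : W * Wᴴ = 1) (a : Fin m) :
    ∑ b, ‖W a b‖ ^ 2 = 1 := by
  have h := congrFun (congrFun hW a) a
  rw [Matrix.mul_apply] at h
  simp only [Matrix.conjTranspose_apply, Matrix.one_apply_eq] at h
  have : (((∑ b, ‖W a b‖ ^ 2 : ℝ)) : ℂ) = 1 := by
    rw [Complex.ofReal_sum]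
    rw [← h]
    refine Finset.sum_congr rfl fun b _ => ?_
    rw [Complex.star_def, Complex.mul_conj, Complex.normSq_eq_norm_sq,
      Complex.ofReal_pow]
  exact_mod_cast this

lemma unitary_col_sum {m : ℕ} (W : Matrix (Fin m) (Fin m) ℂ) (hW : Wᴴ * W = 1) (b : Fin m) :
    ∑ a, ‖W a b‖ ^ 2 = 1 := by
  have h := congrFun (congrFun hW b) b
  rw [Matrix.mul_apply] at h
  simp only [Matrix.conjTranspose_apply, Matrix.one_apply_eq] at h
  have : (((∑ a, ‖W a b‖ ^ 2 : ℝ)) : ℂ) = 1 := by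
    rw [Complex.ofReal_sum]
    rw [← h]
    refine Finset.sum_congr rfl fun a _ => ?_
    rw [Complex.star_def, mul_comm, Complex.mul_conj, Complex.normSq_eq_norm_sq,
      Complex.ofReal_pow]
  exact_mod_cast this

lemma re_trace_diag_conj {n : ℕ} (d e : Fin n → ℝ) (Z : Matrix (Fin n) (Fin n) ℂ) :
    (Matrix.trace (Matrix.diagonal (fun i => (d i : ℂ)) * Z
        * Matrix.diagonal (fun j => (e j : ℂ)) * Zᴴ)).re
      = ∑ a, ∑ b, d a * e b * ‖Z a b‖ ^ 2 := by
  rw [Matrix.trace, Complex.re_sum]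
  refine Finset.sum_congr rfl fun a _ => ?_
  rw [Matrix.diag_apply, Matrix.mul_apply, Complex.re_sum]
  refine Finset.sum_congr rfl fun b _ => ?_
  rw [Matrix.mul_apply]
  have : (∑ j, (Matrix.diagonal (fun i => (d i : ℂ)) * Z) a j
      * Matrix.diagonal (fun j => (e j : ℂ)) j b) =
      (d a : ℂ) * Z a b * (e b : ℂ) := by
    rw [Finset.sum_eq_single b]
    · rw [Matrix.diagonal_apply_eq, Matrix.diagonal_mul]
    · intro j _ hj
      rw [Matrix.diagonal_apply_ne _ hj, mul_zero]
    · intro h; exact absurd (Finset.mem_univ _) h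
  rw [this, Matrix.conjTranspose_apply]
  have : (d a : ℂ) * Z a b * (e b : ℂ) * star (Z a b)
      = ((d a * e b * ‖Z a b‖ ^ 2 : ℝ) : ℂ) := by
    have hz : Z a b * star (Z a b) = ((‖Z a b‖ ^ 2 : ℝ) : ℂ) := by
      rw [Complex.star_def, Complex.mul_conj, Complex.normSq_eq_norm_sq,
        Complex.ofReal_pow]
    calc (d a : ℂ) * Z a b * (e b : ℂ) * star (Z a b)
        = (d a : ℂ) * (e b : ℂ) * (Z a b * star (Z a b)) := by ring
      _ = _ := by rw [hz]; push_cast; ring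
  rw [this, Complex.ofReal_re]

open Polynomial

lemma sig_anti {σ : ℕ → ℝ} {r : ℕ} (h : ∀ j, 1 ≤ j → j < r → σ (j + 1) ≤ σ j) :
    ∀ a b, 1 ≤ a → a ≤ b → b ≤ r → σ b ≤ σ a := by
  intro a b ha hab hbr
  induction b, hab using Nat.le_induction with
  | base => exact le_refl _
  | succ b hab ih =>
    exact le_trans (h b (le_trans ha hab) (by omega)) (ih (by omega))

lemma sing_vals_eq {m r s : ℕ} (hr : r ≤ m) (hs : s ≤ m)
    (σ τ : ℕ → ℝ)
    (hσpos : ∀ j, 1 ≤ j → j ≤ r → 0 < σ j) (hτpos : ∀ j, 1 ≤ j → j ≤ s → 0 < τ j)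
    (hσmono : ∀ j, 1 ≤ j → j < r → σ (j + 1) ≤ σ j)
    (hτmono : ∀ j, 1 ≤ j → j < s → τ (j + 1) ≤ τ j)
    (W : Matrix (Fin m) (Fin m) ℂ) (hW : W * Wᴴ = 1)
    (hcomm : Matrix.diagonal (fun a : Fin m => ((if (a:ℕ) < r then σ ((a:ℕ)+1) else 0 : ℝ) : ℂ))
        * W = W * Matrix.diagonal
          (fun b : Fin m => ((if (b:ℕ) < s then τ ((b:ℕ)+1) else 0 : ℝ) : ℂ))) :
    r = s ∧ ∀ j, 1 ≤ j → j ≤ r → σ j = τ j := by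
  set d : Fin m → ℂ := fun a => ((if (a:ℕ) < r then σ ((a:ℕ)+1) else 0 : ℝ) : ℂ) with hd
  set e : Fin m → ℂ := fun b => ((if (b:ℕ) < s then τ ((b:ℕ)+1) else 0 : ℝ) : ℂ) with he
  have hdetW : Matrix.det W ≠ 0 := by
    have h1 : Matrix.det W * Matrix.det Wᴴ = 1 := by
      rw [← Matrix.det_mul, hW, Matrix.det_one]
    exact left_ne_zero_of_mul_eq_one h1
  -- evaluation identity
  have heval : ∀ x : ℂ, (∏ a : Fin m, (x - d a)) = ∏ a : Fin m, (x - e a) := by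
    intro x
    have h2 : (x • (1 : Matrix (Fin m) (Fin m) ℂ) - Matrix.diagonal d) * W
        = W * (x • (1 : Matrix (Fin m) (Fin m) ℂ) - Matrix.diagonal e) := by
      rw [Matrix.sub_mul, Matrix.mul_sub, hcomm, smul_mul_assoc, Matrix.one_mul,
        mul_smul_comm, Matrix.mul_one]
    have h3 : x • (1 : Matrix (Fin m) (Fin m) ℂ) - Matrix.diagonal d
        = Matrix.diagonal (fun a => x - d a) := by
      rw [Matrix.smul_one_eq_diagonal, ← Matrix.diagonal_sub]
    have h4 : x • (1 : Matrix (Fin m) (Fin m) ℂ) - Matrix.diagonal e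
        = Matrix.diagonal (fun a => x - e a) := by
      rw [Matrix.smul_one_eq_diagonal, ← Matrix.diagonal_sub]
    have h5 := congrArg Matrix.det h2
    rw [Matrix.det_mul, Matrix.det_mul, h3, h4, Matrix.det_diagonal, Matrix.det_diagonal,
      mul_comm (Matrix.det W)] at h5
    exact mul_right_cancel₀ hdetW h5
  -- polynomial identity
  have hpq : (∏ a : Fin m, (X - C (d a))) = ∏ a : Fin m, (X - C (e a)) := by
    apply Polynomial.funext
    intro x
    simp only [eval_prod, eval_sub, eval_X, eval_C]
    exact heval x
  -- split into range products
  have hsplit : ∀ (k : ℕ) (hk : k ≤ m) (ρ : ℕ → ℝ),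
      (∏ a : Fin m, (X - C (((if (a:ℕ) < k then ρ ((a:ℕ)+1) else 0 : ℝ) : ℂ))))
        = (∏ i ∈ Finset.range k, (X - C ((ρ (i+1) : ℝ) : ℂ))) * X ^ (m - k) := by
    intro k hk ρ
    rw [Fin.prod_univ_eq_prod_range
      (fun i : ℕ => X - C (((if i < k then ρ (i+1) else 0 : ℝ) : ℂ))) m]
    rw [← Finset.prod_range_mul_prod_Ico _ hk]
    congr 1
    · exact Finset.prod_congr rfl fun i hi => by
        rw [if_pos (Finset.mem_range.1 hi)]
    · rw [← Nat.card_Ico k m, ← Finset.prod_const]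
      refine Finset.prod_congr rfl fun i hi => ?_
      have hik := Finset.mem_Ico.1 hi
      rw [if_neg (by omega), Complex.ofReal_zero, map_zero, sub_zero]
  simp only [hd, he] at hpq
  rw [hsplit r hr σ, hsplit s hs τ] at hpq
  set Mσ : Multiset ℂ := (Finset.range r).val.map (fun i => ((σ (i+1) : ℝ) : ℂ)) with hMσ
  set Mτ : Multiset ℂ := (Finset.range s).val.map (fun i => ((τ (i+1) : ℝ) : ℂ)) with hMτ
  have hPσ : (∏ i ∈ Finset.range r, (X - C ((σ (i+1) : ℝ) : ℂ)))
      = (Mσ.map (fun c => X - C c)).prod := by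
    rw [Finset.prod_eq_multiset_prod, hMσ, Multiset.map_map]
    rfl
  have hPτ : (∏ i ∈ Finset.range s, (X - C ((τ (i+1) : ℝ) : ℂ)))
      = (Mτ.map (fun c => X - C c)).prod := by
    rw [Finset.prod_eq_multiset_prod, hMτ, Multiset.map_map]
    rfl
  rw [hPσ, hPτ] at hpq
  have hmonσ : ((Mσ.map (fun c => X - C c)).prod * X ^ (m - r)).Monic :=
    (Polynomial.monic_multiset_prod_of_monic _ _ fun c _ => monic_X_sub_C c).mul
      (monic_X_pow _)
  have hmonτ : ((Mτ.map (fun c => X - C c)).prod * X ^ (m - s)).Monic :=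
    (Polynomial.monic_multiset_prod_of_monic _ _ fun c _ => monic_X_sub_C c).mul
      (monic_X_pow _)
  have hroots := congrArg Polynomial.roots hpq
  rw [Polynomial.roots_mul hmonσ.ne_zero,
    Polynomial.roots_mul hmonτ.ne_zero, Polynomial.roots_multiset_prod_X_sub_C,
    Polynomial.roots_multiset_prod_X_sub_C, Polynomial.roots_pow, Polynomial.roots_pow,
    Polynomial.roots_X, Multiset.nsmul_singleton, Multiset.nsmul_singleton] at hroots
  -- hroots : Mσ + replicate (m-r) 0 = Mτ + replicate (m-s) 0
  have h0σ : (0 : ℂ) ∉ Mσ := by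
    rw [hMσ]
    intro hmem
    obtain ⟨i, hi, hii⟩ := Multiset.mem_map.1 hmem
    rw [Finset.range_val, Multiset.mem_range] at hi
    exact absurd (Complex.ofReal_eq_zero.1 hii) (hσpos (i+1) (by omega) (by omega)).ne'
  have h0τ : (0 : ℂ) ∉ Mτ := by
    rw [hMτ]
    intro hmem
    obtain ⟨i, hi, hii⟩ := Multiset.mem_map.1 hmem
    rw [Finset.range_val, Multiset.mem_range] at hi
    exact absurd (Complex.ofReal_eq_zero.1 hii) (hτpos (i+1) (by omega) (by omega)).ne'
  have hcount := congrArg (Multiset.count (0:ℂ)) hroots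
  rw [Multiset.count_add, Multiset.count_add, Multiset.count_replicate, if_pos rfl,
    Multiset.count_replicate, if_pos rfl, Multiset.count_eq_zero_of_notMem h0σ,
    Multiset.count_eq_zero_of_notMem h0τ] at hcount
  have hrs : r = s := by omega
  subst hrs
  have hMeq : Mσ = Mτ := by
    have := hroots
    rwa [add_right_cancel_iff] at this
  -- back to real multisets
  have hreal : Multiset.map (fun i => σ (i+1)) (Finset.range r).val
      = Multiset.map (fun i => τ (i+1)) (Finset.range r).val := by
    apply Multiset.map_injective Complex.ofReal_injective
    rw [Multiset.map_map, Multiset.map_map]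
    exact hMeq
  refine ⟨rfl, ?_⟩
  -- convert to lists
  have hlist : (List.range r).map (fun i => σ (i+1)) = (List.range r).map (fun i => τ (i+1)) := by
    have hperm : ((List.range r).map (fun i => σ (i+1))).Perm
        ((List.range r).map (fun i => τ (i+1))) := by
      rw [← Multiset.coe_eq_coe]
      exact hreal
    have sσ : ((List.range r).map (fun i => σ (i+1))).Pairwise (· ≥ ·) := by
      rw [List.pairwise_map]
      refine (List.pairwise_lt_range (n := r)).imp_of_mem ?_
      intro a b ha hb hab
      rw [List.mem_range] at hb
      exact sig_anti hσmono (a+1) (b+1) (by omega) (by omega) (by omega)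
    have sτ : ((List.range r).map (fun i => τ (i+1))).Pairwise (· ≥ ·) := by
      rw [List.pairwise_map]
      refine (List.pairwise_lt_range (n := r)).imp_of_mem ?_
      intro a b ha hb hab
      rw [List.mem_range] at hb
      exact sig_anti hτmono (a+1) (b+1) (by omega) (by omega) (by omega)
    exact List.Perm.eq_of_pairwise' sσ sτ hperm
  intro j hj1 hjr
  have hi : j - 1 < r := by omega
  have h1 := congrArg (fun L : List ℝ => L[j-1]?) hlist
  simp only [List.getElem?_map, List.getElem?_range hi, Option.map_some] at h1
  have h2 : σ (j - 1 + 1) = τ (j - 1 + 1) := Option.some.inj h1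
  have h3 : j - 1 + 1 = j := by omega
  rwa [h3] at h2

lemma sum_ite_fin {n k : ℕ} (hn : 0 < n) (hkn : k ≤ n) (c : ℕ → ℝ) (g : Fin n → ℝ) :
    (∑ p : Fin n, (if (p:ℕ) < k then c (p:ℕ) else 0) * g p)
      = ∑ i ∈ Finset.range k, c i * g (cF n hn i) := by
  have h1 : ∀ p : Fin n, (if (p:ℕ) < k then c (p:ℕ) else 0) * g p
      = (fun i : ℕ => if i < k then c i * g (cF n hn i) else 0) ↑p := by
    intro p; by_cases hp : (p:ℕ) < k
    · simp only [if_pos hp, cF_fin hn p]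
    · simp only [if_neg hp, zero_mul]
  rw [Finset.sum_congr rfl (fun p _ => h1 p),
    Fin.sum_univ_eq_sum_range (fun i : ℕ => if i < k then c i * g (cF n hn i) else 0) n,
    sum_if_range hkn]

lemma diag_herm {n : ℕ} (d : Fin n → ℝ) :
    (Matrix.diagonal (fun i => (d i : ℂ)))ᴴ = Matrix.diagonal (fun i => (d i : ℂ)) := by
  rw [Matrix.diagonal_conjTranspose]
  funext i
  simp [Pi.star_def, Complex.star_def, Complex.conj_ofReal]

lemma conj_diag_herm {n : ℕ} (V : Matrix (Fin n) (Fin n) ℂ) (d : Fin n → ℝ) :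
    (V * Matrix.diagonal (fun i => (d i : ℂ)) * Vᴴ)ᴴ
      = V * Matrix.diagonal (fun i => (d i : ℂ)) * Vᴴ := by
  simp only [Matrix.conjTranspose_mul, Matrix.conjTranspose_conjTranspose, diag_herm,
    Matrix.mul_assoc]

lemma trace_conj_sq {n : ℕ} (V : Matrix (Fin n) (Fin n) ℂ) (hV : Vᴴ * V = 1)
    (d : Fin n → ℝ) :
    ((V * Matrix.diagonal (fun i => (d i : ℂ)) * Vᴴ)
        * (V * Matrix.diagonal (fun i => (d i : ℂ)) * Vᴴ)).trace.re = ∑ i, (d i) ^ 2 := by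
  have h1 : (V * Matrix.diagonal (fun i => (d i : ℂ)) * Vᴴ)
        * (V * Matrix.diagonal (fun i => (d i : ℂ)) * Vᴴ)
      = V * (Matrix.diagonal (fun i => (d i : ℂ)) * Matrix.diagonal (fun i => (d i : ℂ))) * Vᴴ := by
    simp only [Matrix.mul_assoc]
    rw [← Matrix.mul_assoc Vᴴ V, hV, Matrix.one_mul]
  rw [h1, trace_unitary_conj _ _ hV, Matrix.diagonal_mul_diagonal, Matrix.trace_diagonal,
    Complex.re_sum]
  refine Finset.sum_congr rfl fun i _ => ?_
  rw [← Complex.ofReal_mul, Complex.ofReal_re, pow_two]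

lemma trace_conj_cross {n : ℕ} (V V' : Matrix (Fin n) (Fin n) ℂ) (d e : Fin n → ℝ) :
    ((V * Matrix.diagonal (fun i => (d i : ℂ)) * Vᴴ)
        * (V' * Matrix.diagonal (fun i => (e i : ℂ)) * V'ᴴ)).trace.re
      = ∑ a, ∑ b, d a * e b * ‖(Vᴴ * V') a b‖ ^ 2 := by
  have h1 : (V * Matrix.diagonal (fun i => (d i : ℂ)) * Vᴴ)
        * (V' * Matrix.diagonal (fun i => (e i : ℂ)) * V'ᴴ)
      = V * (Matrix.diagonal (fun i => (d i : ℂ)) * (Vᴴ * V')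
          * Matrix.diagonal (fun i => (e i : ℂ)) * V'ᴴ) := by
    simp only [Matrix.mul_assoc]
  rw [h1, Matrix.trace_mul_comm]
  have h2 : Matrix.diagonal (fun i => (d i : ℂ)) * (Vᴴ * V')
          * Matrix.diagonal (fun i => (e i : ℂ)) * V'ᴴ * V
      = Matrix.diagonal (fun i => (d i : ℂ)) * (Vᴴ * V')
          * Matrix.diagonal (fun i => (e i : ℂ)) * (Vᴴ * V')ᴴ := by
    rw [Matrix.conjTranspose_mul, Matrix.conjTranspose_conjTranspose, Matrix.mul_assoc]
  rw [h2]
  exact re_trace_diag_conj d e (Vᴴ * V')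

lemma frobSq_sub_conj {n : ℕ} (V V' : Matrix (Fin n) (Fin n) ℂ)
    (hV : Vᴴ * V = 1) (hV' : V'ᴴ * V' = 1) (d e : Fin n → ℝ) :
    frobSq (V * Matrix.diagonal (fun i => (d i : ℂ)) * Vᴴ
        - V' * Matrix.diagonal (fun i => (e i : ℂ)) * V'ᴴ)
      = ∑ i, (d i) ^ 2 + ∑ j, (e j) ^ 2
        - 2 * ∑ a, ∑ b, d a * e b * ‖(Vᴴ * V') a b‖ ^ 2 := by
  set H := V * Matrix.diagonal (fun i => (d i : ℂ)) * Vᴴ with hH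
  set K := V' * Matrix.diagonal (fun i => (e i : ℂ)) * V'ᴴ with hK
  rw [frobSq_eq_trace, Matrix.conjTranspose_sub]
  rw [hH, hK, conj_diag_herm, conj_diag_herm, ← hH, ← hK]
  rw [Matrix.sub_mul, Matrix.mul_sub, Matrix.mul_sub, Matrix.trace_sub, Matrix.trace_sub,
    Matrix.trace_sub]
  have hKH : (K * H).trace = (H * K).trace := Matrix.trace_mul_comm K H
  rw [hKH]
  simp only [Complex.sub_re]
  rw [hH, hK]
  rw [trace_conj_sq V hV d, trace_conj_sq V' hV' e, trace_conj_cross V V' d e]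
  ring

lemma sum_ite_sq {n k : ℕ} (hn : 0 < n) (hkn : k ≤ n) (ρ : ℕ → ℝ) :
    (∑ p : Fin n, (if (p:ℕ) < k then ρ ((p:ℕ)+1) else 0) ^ 2)
      = ∑ i ∈ Finset.range k, ρ (i+1) ^ 2 := by
  rw [Finset.sum_congr rfl fun p (_ : p ∈ Finset.univ) => pow_two _,
    sum_ite_fin hn hkn (fun i => ρ (i+1))
      (fun q : Fin n => if (q:ℕ) < k then ρ ((q:ℕ)+1) else 0)]
  refine Finset.sum_congr rfl fun i hi => ?_
  have hik : i < k := Finset.mem_range.1 hi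
  rw [cF_coe hn (lt_of_lt_of_le hik hkn), if_pos hik, pow_two]

lemma sum_ite_double {n k l : ℕ} (hn : 0 < n) (hkn : k ≤ n) (hln : l ≤ n)
    (ρ η : ℕ → ℝ) (g : Fin n → Fin n → ℝ) :
    (∑ a : Fin n, ∑ b : Fin n,
        (if (a:ℕ) < k then ρ ((a:ℕ)+1) else 0) * (if (b:ℕ) < l then η ((b:ℕ)+1) else 0) * g a b)
      = ∑ i ∈ Finset.range k, ∑ j ∈ Finset.range l,
          ρ (i+1) * η (j+1) * g (cF n hn i) (cF n hn j) := by
  have hinner : ∀ a : Fin n, (∑ b : Fin n,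
      (if (a:ℕ) < k then ρ ((a:ℕ)+1) else 0) * (if (b:ℕ) < l then η ((b:ℕ)+1) else 0) * g a b)
      = (if (a:ℕ) < k then ρ ((a:ℕ)+1) else 0)
        * ∑ j ∈ Finset.range l, η (j+1) * g a (cF n hn j) := by
    intro a
    have h0 : (∑ b : Fin n,
        (if (a:ℕ) < k then ρ ((a:ℕ)+1) else 0) * (if (b:ℕ) < l then η ((b:ℕ)+1) else 0) * g a b)
        = (if (a:ℕ) < k then ρ ((a:ℕ)+1) else 0)
          * ∑ b : Fin n, (if (b:ℕ) < l then η ((b:ℕ)+1) else 0) * g a b := by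
      rw [Finset.mul_sum]
      exact Finset.sum_congr rfl fun b _ => by ring
    rw [h0, sum_ite_fin hn hln (fun j => η (j+1)) (g a)]
  rw [Finset.sum_congr rfl fun a (_ : a ∈ Finset.univ) => hinner a,
    sum_ite_fin hn hkn (fun i => ρ (i+1))
      (fun a : Fin n => ∑ j ∈ Finset.range l, η (j+1) * g a (cF n hn j))]
  refine Finset.sum_congr rfl fun i _ => ?_
  rw [Finset.mul_sum]
  exact Finset.sum_congr rfl fun j _ => by ring

lemma two_re_le (w z : ℂ) : 2 * (w * star z).re ≤ ‖w‖ ^ 2 + ‖z‖ ^ 2 := by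
  have h1 : 0 ≤ Complex.normSq (w - z) := Complex.normSq_nonneg _
  rw [Complex.normSq_sub] at h1
  have h2 : Complex.normSq w = ‖w‖ ^ 2 := by
    rw [Complex.normSq_eq_norm_sq]
  have h3 : Complex.normSq z = ‖z‖ ^ 2 := by
    rw [Complex.normSq_eq_norm_sq]
  rw [h2, h3] at h1
  rw [Complex.star_def]
  linarith

lemma mulconj_unitary {m : ℕ} (U U' : Matrix (Fin m) (Fin m) ℂ)
    (hU1 : Uᴴ * U = 1) (hU2' : U' * U'ᴴ = 1) : (Uᴴ * U') * (Uᴴ * U')ᴴ = 1 := by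
  rw [Matrix.conjTranspose_mul, Matrix.conjTranspose_conjTranspose]
  calc Uᴴ * U' * (U'ᴴ * U) = Uᴴ * ((U' * U'ᴴ) * U) := by simp only [Matrix.mul_assoc]
    _ = 1 := by rw [hU2', Matrix.one_mul, hU1]

lemma conjmul_unitary {m : ℕ} (U U' : Matrix (Fin m) (Fin m) ℂ)
    (hU2 : U * Uᴴ = 1) (hU1' : U'ᴴ * U' = 1) : (Uᴴ * U')ᴴ * (Uᴴ * U') = 1 := by
  rw [Matrix.conjTranspose_mul, Matrix.conjTranspose_conjTranspose]
  calc U'ᴴ * U * (Uᴴ * U') = U'ᴴ * ((U * Uᴴ) * U') := by simp only [Matrix.mul_assoc]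
    _ = 1 := by rw [hU2, Matrix.one_mul, hU1']

lemma re_trace_svd_self {m n k : ℕ} (hm : 0 < m) (hn : 0 < n) (ρ : ℕ → ℝ)
    (hkm : k ≤ m) (hkn : k ≤ n) :
    (Matrix.trace ((svdMat m n k ρ)ᴴ * svdMat m n k ρ)).re
      = ∑ i ∈ Finset.range k, ρ (i+1) ^ 2 := by
  rw [trace_svd_conjTranspose_mul hm hn ρ hkm hkn]
  rw [Complex.re_sum]
  refine Finset.sum_congr rfl fun i hi => ?_
  have hik : i < k := Finset.mem_range.1 hi
  rw [svdMat, Matrix.of_apply, cF_coe hm (lt_of_lt_of_le hik hkm),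
    cF_coe hn (lt_of_lt_of_le hik hkn), if_pos ⟨rfl, hik⟩, ← Complex.ofReal_mul,
    Complex.ofReal_re, pow_two]

lemma frobSq_sub_svd {m n r s : ℕ} (hm : 0 < m) (hn : 0 < n)
    (hrm : r ≤ m) (hrn : r ≤ n) (hsm : s ≤ m) (hsn : s ≤ n) (σ τ : ℕ → ℝ)
    (A At : Matrix (Fin m) (Fin n) ℂ)
    (U U' : Matrix (Fin m) (Fin m) ℂ) (V V' : Matrix (Fin n) (Fin n) ℂ)
    (hU1 : Uᴴ * U = 1) (hV1 : Vᴴ * V = 1) (hU1' : U'ᴴ * U' = 1) (hV1' : V'ᴴ * V' = 1)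
    (hAe : A = U * svdMat m n r σ * Vᴴ) (hAte : At = U' * svdMat m n s τ * V'ᴴ) :
    frobSq (A - At) = ∑ i ∈ Finset.range r, σ (i+1) ^ 2 + ∑ j ∈ Finset.range s, τ (j+1) ^ 2
      - 2 * ∑ i ∈ Finset.range r, ∑ j ∈ Finset.range s, σ (i+1) * τ (j+1) *
          ((Uᴴ * U') (cF m hm i) (cF m hm j) * star ((Vᴴ * V') (cF n hn i) (cF n hn j))).re := by
  have hAA : Aᴴ * A = V * ((svdMat m n r σ)ᴴ * svdMat m n r σ) * Vᴴ := by
    rw [hAe]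
    simp only [Matrix.conjTranspose_mul, Matrix.conjTranspose_conjTranspose, Matrix.mul_assoc]
    rw [← Matrix.mul_assoc Uᴴ U, hU1, Matrix.one_mul]
  have hAtAt : Atᴴ * At = V' * ((svdMat m n s τ)ᴴ * svdMat m n s τ) * V'ᴴ := by
    rw [hAte]
    simp only [Matrix.conjTranspose_mul, Matrix.conjTranspose_conjTranspose, Matrix.mul_assoc]
    rw [← Matrix.mul_assoc U'ᴴ U', hU1', Matrix.one_mul]
  have hAAt : (Matrix.trace (Aᴴ * At)).re
      = ∑ i ∈ Finset.range r, ∑ j ∈ Finset.range s, σ (i+1) * τ (j+1) *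
          ((Uᴴ * U') (cF m hm i) (cF m hm j) * star ((Vᴴ * V') (cF n hn i) (cF n hn j))).re := by
    have h1 : Aᴴ * At = V * ((svdMat m n r σ)ᴴ * ((Uᴴ * U') * svdMat m n s τ * V'ᴴ)) := by
      rw [hAe, hAte]
      simp only [Matrix.conjTranspose_mul, Matrix.conjTranspose_conjTranspose, Matrix.mul_assoc]
    have h2 : Matrix.trace (Aᴴ * At)
        = Matrix.trace ((svdMat m n r σ)ᴴ * ((Uᴴ * U') * svdMat m n s τ * (Vᴴ * V')ᴴ)) := by
      rw [h1, Matrix.trace_mul_comm]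
      congr 1
      rw [Matrix.conjTranspose_mul, Matrix.conjTranspose_conjTranspose]
      simp only [Matrix.mul_assoc]
    rw [h2, trace_svd_conjTranspose_mul hm hn σ hrm hrn]
    rw [Complex.re_sum]
    refine Finset.sum_congr rfl fun i _ => ?_
    rw [mul_svd_mul_conjT_apply hm hn τ hsm hsn, Finset.mul_sum, Complex.re_sum]
    refine Finset.sum_congr rfl fun j _ => ?_
    rw [← mul_assoc, ← Complex.ofReal_mul, Complex.re_ofReal_mul]
  have hAtA : (Matrix.trace (Atᴴ * A)).re = (Matrix.trace (Aᴴ * At)).re := by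
    have h1 : Atᴴ * A = (Aᴴ * At)ᴴ := by
      rw [Matrix.conjTranspose_mul, Matrix.conjTranspose_conjTranspose]
    rw [h1, Matrix.trace_conjTranspose]
    exact Complex.conj_re _
  rw [frobSq_eq_trace, Matrix.conjTranspose_sub, Matrix.sub_mul, Matrix.mul_sub,
    Matrix.mul_sub, Matrix.trace_sub, Matrix.trace_sub, Matrix.trace_sub]
  simp only [Complex.sub_re]
  rw [hAA, hAtAt, trace_unitary_conj _ _ hV1, trace_unitary_conj _ _ hV1',
    re_trace_svd_self hm hn σ hrm hrn, re_trace_svd_self hm hn τ hsm hsn]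
  rw [hAAt] at *
  rw [hAtA, hAAt]
  ring

theorem strict_araki_yamagami
    (m n r s : ℕ) (hm : 0 < m) (hn : 0 < n) (hrs : r ≤ s) (hsmn : s ≤ min m n)
    (A At : Matrix (Fin m) (Fin n) ℂ)
    (σ τ : ℕ → ℝ) (hσ : SingVals r σ) (hτ : SingVals s τ)
    (hA : HasSVD A r σ) (hAtilde : HasSVD At s τ)
    (hrankA : A.rank = r) (hrankAt : At.rank = s)
    (hne : r ≠ s ∨ (r = s ∧ ∃ j, 1 ≤ j ∧ j ≤ r ∧ σ j ≠ τ j)) :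
    frob (absMat A - absMat At) < Real.sqrt 2 * frob (A - At) := by
  obtain ⟨U, V, hU1, hU2, hV1, hV2, hAe⟩ := hA
  obtain ⟨U', V', hU1', hU2', hV1', hV2', hAte⟩ := hAtilde
  obtain ⟨hσpos, hσmono⟩ := hσ
  obtain ⟨hτpos, hτmono⟩ := hτ
  have hsm : s ≤ m := le_trans hsmn (min_le_left m n)
  have hsn : s ≤ n := le_trans hsmn (min_le_right m n)
  have hrm : r ≤ m := le_trans hrs hsm
  have hrn : r ≤ n := le_trans hrs hsn
  -- abbreviations
  set Sσ : ℝ := ∑ i ∈ Finset.range r, σ (i+1) ^ 2 with hSσ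
  set Sτ : ℝ := ∑ j ∈ Finset.range s, τ (j+1) ^ 2 with hSτ
  set Xz : ℝ := ∑ i ∈ Finset.range r, ∑ j ∈ Finset.range s,
      σ (i+1) * τ (j+1) * ‖(Vᴴ * V') (cF n hn i) (cF n hn j)‖ ^ 2 with hXz
  set Yw : ℝ := ∑ i ∈ Finset.range r, ∑ j ∈ Finset.range s,
      σ (i+1) * τ (j+1) * ‖(Uᴴ * U') (cF m hm i) (cF m hm j)‖ ^ 2 with hYw
  set Cc : ℝ := ∑ i ∈ Finset.range r, ∑ j ∈ Finset.range s, σ (i+1) * τ (j+1) *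
      ((Uᴴ * U') (cF m hm i) (cF m hm j) * star ((Vᴴ * V') (cF n hn i) (cF n hn j))).re with hCc
  -- key 2 : expansion of ‖A - At‖²
  have key2 : frobSq (A - At) = Sσ + Sτ - 2 * Cc :=
    frobSq_sub_svd hm hn hrm hrn hsm hsn σ τ A At U U' V V' hU1 hV1 hU1' hV1' hAe hAte
  -- key 1 : expansion of ‖|A| - |At|‖²
  have key1 : frobSq (absMat A - absMat At) = Sσ + Sτ - 2 * Xz := by
    rw [absMat_eq hm σ hrm hσpos A U V hU1 hV1 hAe,
      absMat_eq hm τ hsm hτpos At U' V' hU1' hV1' hAte,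
      frobSq_sub_conj V V' hV1 hV1'
        (fun p : Fin n => if (p:ℕ) < r then σ ((p:ℕ)+1) else 0)
        (fun p : Fin n => if (p:ℕ) < s then τ ((p:ℕ)+1) else 0),
      sum_ite_sq hn hrn σ, sum_ite_sq hn hsn τ,
      sum_ite_double hn hrn hsn σ τ (fun a b => ‖(Vᴴ * V') a b‖ ^ 2)]
  -- key 3 : strict positivity of Sσ + Sτ - 2 Yw
  have hWW : (Uᴴ * U') * (Uᴴ * U')ᴴ = 1 := mulconj_unitary U U' hU1 hU2'
  have hWW' : (Uᴴ * U')ᴴ * (Uᴴ * U') = 1 := conjmul_unitary U U' hU2 hU1'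
  have key3 : 0 < Sσ + Sτ - 2 * Yw := by
    have e1 : (∑ a : Fin m, ∑ b : Fin m,
        (if (a:ℕ) < r then σ ((a:ℕ)+1) else 0) ^ 2 * ‖(Uᴴ * U') a b‖ ^ 2) = Sσ := by
      have h1 : ∀ a : Fin m, (∑ b : Fin m,
          (if (a:ℕ) < r then σ ((a:ℕ)+1) else 0) ^ 2 * ‖(Uᴴ * U') a b‖ ^ 2)
          = (if (a:ℕ) < r then σ ((a:ℕ)+1) else 0) ^ 2 := fun a => by
        rw [← Finset.mul_sum, unitary_row_sum _ hWW a, mul_one]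
      rw [Finset.sum_congr rfl fun a _ => h1 a, hSσ]
      exact sum_ite_sq hm hrm σ
    have e2 : (∑ a : Fin m, ∑ b : Fin m,
        (if (b:ℕ) < s then τ ((b:ℕ)+1) else 0) ^ 2 * ‖(Uᴴ * U') a b‖ ^ 2) = Sτ := by
      rw [Finset.sum_comm]
      have h1 : ∀ b : Fin m, (∑ a : Fin m,
          (if (b:ℕ) < s then τ ((b:ℕ)+1) else 0) ^ 2 * ‖(Uᴴ * U') a b‖ ^ 2)
          = (if (b:ℕ) < s then τ ((b:ℕ)+1) else 0) ^ 2 := fun b => by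
        rw [← Finset.mul_sum, unitary_col_sum _ hWW' b, mul_one]
      rw [Finset.sum_congr rfl fun b _ => h1 b, hSτ]
      exact sum_ite_sq hm hsm τ
    have e3 : (∑ a : Fin m, ∑ b : Fin m,
        (if (a:ℕ) < r then σ ((a:ℕ)+1) else 0) * (if (b:ℕ) < s then τ ((b:ℕ)+1) else 0)
          * ‖(Uᴴ * U') a b‖ ^ 2) = Yw := by
      rw [hYw]
      exact sum_ite_double hm hrm hsm σ τ (fun a b => ‖(Uᴴ * U') a b‖ ^ 2)
    have hQid : (∑ a : Fin m, ∑ b : Fin m,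
        ((if (a:ℕ) < r then σ ((a:ℕ)+1) else 0) - (if (b:ℕ) < s then τ ((b:ℕ)+1) else 0)) ^ 2
          * ‖(Uᴴ * U') a b‖ ^ 2) = Sσ + Sτ - 2 * Yw := by
      have hexp : ∀ a b : Fin m,
          ((if (a:ℕ) < r then σ ((a:ℕ)+1) else 0) - (if (b:ℕ) < s then τ ((b:ℕ)+1) else 0)) ^ 2
            * ‖(Uᴴ * U') a b‖ ^ 2
          = (if (a:ℕ) < r then σ ((a:ℕ)+1) else 0) ^ 2 * ‖(Uᴴ * U') a b‖ ^ 2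
            + (if (b:ℕ) < s then τ ((b:ℕ)+1) else 0) ^ 2 * ‖(Uᴴ * U') a b‖ ^ 2
            - ((if (a:ℕ) < r then σ ((a:ℕ)+1) else 0)
                * (if (b:ℕ) < s then τ ((b:ℕ)+1) else 0) * ‖(Uᴴ * U') a b‖ ^ 2) * 2 := fun a b => by
        ring
      rw [Finset.sum_congr rfl fun a _ => Finset.sum_congr rfl fun b _ => hexp a b]
      simp only [Finset.sum_add_distrib, Finset.sum_sub_distrib, ← Finset.sum_mul]
      rw [e1, e2, e3]
      ring
    have hQnonneg : (0:ℝ) ≤ ∑ a : Fin m, ∑ b : Fin m,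
        ((if (a:ℕ) < r then σ ((a:ℕ)+1) else 0) - (if (b:ℕ) < s then τ ((b:ℕ)+1) else 0)) ^ 2
          * ‖(Uᴴ * U') a b‖ ^ 2 :=
      Finset.sum_nonneg fun a _ => Finset.sum_nonneg fun b _ =>
        mul_nonneg (sq_nonneg _) (sq_nonneg _)
    rcases lt_or_eq_of_le hQnonneg with hlt | heq
    · rw [hQid] at hlt
      linarith
    · exfalso
      have hterm : ∀ a b : Fin m,
          ((if (a:ℕ) < r then σ ((a:ℕ)+1) else 0) - (if (b:ℕ) < s then τ ((b:ℕ)+1) else 0)) ^ 2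
            * ‖(Uᴴ * U') a b‖ ^ 2 = 0 := by
        intro a b
        have houter := (Finset.sum_eq_zero_iff_of_nonneg (fun a _ =>
          Finset.sum_nonneg fun b _ => mul_nonneg (sq_nonneg _) (sq_nonneg _))).1 heq.symm
        exact (Finset.sum_eq_zero_iff_of_nonneg (fun b _ =>
          mul_nonneg (sq_nonneg _) (sq_nonneg _))).1 (houter a (Finset.mem_univ a)) b
          (Finset.mem_univ b)
      have hcomm : Matrix.diagonal
            (fun a : Fin m => ((if (a:ℕ) < r then σ ((a:ℕ)+1) else 0 : ℝ) : ℂ)) * (Uᴴ * U')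
          = (Uᴴ * U') * Matrix.diagonal
            (fun b : Fin m => ((if (b:ℕ) < s then τ ((b:ℕ)+1) else 0 : ℝ) : ℂ)) := by
        ext a b
        rw [Matrix.diagonal_mul, Matrix.mul_diagonal]
        by_cases hde : (if (a:ℕ) < r then σ ((a:ℕ)+1) else 0)
            = (if (b:ℕ) < s then τ ((b:ℕ)+1) else 0)
        · rw [hde, mul_comm]
        · have h0 : ‖(Uᴴ * U') a b‖ ^ 2 = 0 := by
            rcases mul_eq_zero.1 (hterm a b) with h | h
            · exact absurd (sub_eq_zero.1 ((pow_eq_zero_iff two_ne_zero).1 h)) hde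
            · exact h
          have hW0 : (Uᴴ * U') a b = 0 := by
            rwa [pow_eq_zero_iff two_ne_zero, norm_eq_zero] at h0
          rw [hW0, mul_zero, zero_mul]
      obtain ⟨hrseq, hsve⟩ := sing_vals_eq hrm hsm σ τ hσpos hτpos hσmono hτmono
        (Uᴴ * U') hWW hcomm
      rcases hne with h | ⟨-, j, hj1, hjr, hnej⟩
      · exact h hrseq
      · exact hnej (hsve j hj1 hjr)
  -- key 4 : 2 C ≤ X + Y
  have key4 : 2 * Cc ≤ Xz + Yw := by
    have h1 : 2 * Cc = ∑ i ∈ Finset.range r, ∑ j ∈ Finset.range s,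
        σ (i+1) * τ (j+1) * (2 * ((Uᴴ * U') (cF m hm i) (cF m hm j)
          * star ((Vᴴ * V') (cF n hn i) (cF n hn j))).re) := by
      rw [hCc, Finset.mul_sum]
      refine Finset.sum_congr rfl fun i _ => ?_
      rw [Finset.mul_sum]
      exact Finset.sum_congr rfl fun j _ => by ring
    have h2 : Xz + Yw = ∑ i ∈ Finset.range r, ∑ j ∈ Finset.range s,
        σ (i+1) * τ (j+1) * (‖(Uᴴ * U') (cF m hm i) (cF m hm j)‖ ^ 2
          + ‖(Vᴴ * V') (cF n hn i) (cF n hn j)‖ ^ 2) := by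
      rw [hXz, hYw, ← Finset.sum_add_distrib]
      refine Finset.sum_congr rfl fun i _ => ?_
      rw [← Finset.sum_add_distrib]
      exact Finset.sum_congr rfl fun j _ => by ring
    rw [h1, h2]
    refine Finset.sum_le_sum fun i hi => Finset.sum_le_sum fun j hj => ?_
    have hi' := Finset.mem_range.1 hi
    have hj' := Finset.mem_range.1 hj
    have hστ : 0 ≤ σ (i+1) * τ (j+1) :=
      mul_nonneg (hσpos (i+1) (by omega) (by omega)).le
        (hτpos (j+1) (by omega) (by omega)).le
    exact mul_le_mul_of_nonneg_left (two_re_le _ _) hστ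
  -- conclusion
  have hGF : frobSq (absMat A - absMat At) < 2 * frobSq (A - At) := by
    rw [key1, key2]
    linarith
  rw [frob_eq_sqrt_frobSq, frob_eq_sqrt_frobSq]
  calc Real.sqrt (frobSq (absMat A - absMat At))
      < Real.sqrt (2 * frobSq (A - At)) := Real.sqrt_lt_sqrt (frobSq_nonneg _) hGF
    _ = Real.sqrt 2 * Real.sqrt (frobSq (A - At)) := Real.sqrt_mul (by norm_num) _
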